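/- arXiv:1209.1128 — 3 statements merged into one kernel-verified Lean document; each statement's English description precedes it below -/
import Mathlib

section
/- Let H be a finite family of functions from a set Y to a set Z of size M, and suppose the distribution of (h, h(y)) for h ∈ H and y ∈ Y chosen independently and uniformly at random is within statistical distance δ² of the uniform distribution on H × Z. Then the fraction of h ∈ H with |h(Y)| ≤ M(1 − δ) is at most δ. -/
open Finset

open scoped Classical in
/-- If the distribution of `(h, h(y))` for uniform `(h, y)` is within statistical
distance `δ²` of uniform on `H × Z`, then the fraction of `h` whose image has size at
most `M(1-δ)` is at most `δ`. -/
theorem stmt_2 {H Y Z : Type*} [Fintype H] [Fintype Y] [Fintype Z]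
    [Nonempty H] [Nonempty Y]
    (F : H → Y → Z) (M : ℕ) (hM : Fintype.card Z = M)
    (δ : ℝ) (hδ : 0 < δ)
    (hdist : ∀ T : Finset (H × Z),
      |((Finset.univ.filter (fun p : H × Y => (p.1, F p.1 p.2) ∈ T)).card : ℝ) /
          (Fintype.card H * Fintype.card Y)
        - (T.card : ℝ) / (Fintype.card H * M)| ≤ δ ^ 2) :
    ((Finset.univ.filter
        (fun h : H => ((Finset.univ.image (F h)).card : ℝ) ≤ M * (1 - δ))).card : ℝ)
      ≤ δ * Fintype.card H := by
  set B := Finset.univ.filter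
      (fun h : H => ((Finset.univ.image (F h)).card : ℝ) ≤ M * (1 - δ)) with hB
  have hZne : Nonempty Z := ⟨F (Classical.arbitrary H) (Classical.arbitrary Y)⟩
  have hZ : 0 < M := hM ▸ @Fintype.card_pos _ _ hZne
  have hHpos : (0:ℝ) < Fintype.card H := by exact_mod_cast Fintype.card_pos
  have hYpos : (0:ℝ) < Fintype.card Y := by exact_mod_cast Fintype.card_pos
  have hMpos : (0:ℝ) < M := by exact_mod_cast hZ
  set T := B.biUnion (fun h => ({h} : Finset H) ×ˢ (Finset.univ.image (F h))) with hT
  have hTcard : (T.card : ℝ) = ∑ h ∈ B, ((Finset.univ.image (F h)).card : ℝ) := by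
    rw [hT, Finset.card_biUnion]
    · push_cast
      refine Finset.sum_congr rfl fun h _ => ?_
      simp
    · intro a _ b _ hab
      simp only [Finset.disjoint_left, Finset.mem_product, Finset.mem_singleton]
      rintro p ⟨rfl, -⟩ ⟨rfl, -⟩
      exact hab rfl
  have hfilter : (Finset.univ.filter (fun p : H × Y => (p.1, F p.1 p.2) ∈ T))
      = B ×ˢ Finset.univ := by
    ext p
    simp only [Finset.mem_filter, Finset.mem_univ, true_and, hT, Finset.mem_biUnion,
      Finset.mem_product, Finset.mem_singleton, and_true]
    constructor
    · rintro ⟨a, ha, rfl, -⟩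
      exact ha
    · intro hp
      exact ⟨p.1, hp, rfl, Finset.mem_image_of_mem _ (Finset.mem_univ _)⟩
  have key := hdist T
  rw [hfilter, Finset.card_product, Finset.card_univ] at key
  have hTle : (T.card : ℝ) ≤ B.card * (M * (1 - δ)) := by
    rw [hTcard]
    calc ∑ h ∈ B, ((Finset.univ.image (F h)).card : ℝ)
        ≤ ∑ _h ∈ B, (M * (1 - δ)) := by
          refine Finset.sum_le_sum fun h hh => ?_
          exact (Finset.mem_filter.mp hh).2
      _ = B.card * (M * (1 - δ)) := by rw [Finset.sum_const, nsmul_eq_mul]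
  have h1 : ((B.card * Fintype.card Y : ℕ) : ℝ) / (Fintype.card H * Fintype.card Y)
      = B.card / Fintype.card H := by
    push_cast
    field_simp
  rw [h1] at key
  have h2 : (T.card : ℝ) / (Fintype.card H * M) ≤ B.card * (1 - δ) / Fintype.card H := by
    rw [div_le_div_iff₀ (by positivity) hHpos]
    calc (T.card : ℝ) * Fintype.card H ≤ B.card * (M * (1 - δ)) * Fintype.card H :=
          mul_le_mul_of_nonneg_right hTle hHpos.le
      _ = B.card * (1 - δ) * (Fintype.card H * M) := by ring
  have h3 : (B.card : ℝ) * δ / Fintype.card H ≤ δ ^ 2 := by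
    have := (abs_le.mp key).2
    have : (B.card : ℝ) / Fintype.card H - B.card * (1 - δ) / Fintype.card H ≤ δ ^ 2 :=
      by linarith
    calc (B.card : ℝ) * δ / Fintype.card H
        = (B.card : ℝ) / Fintype.card H - B.card * (1 - δ) / Fintype.card H := by ring
      _ ≤ δ ^ 2 := this
  rw [div_le_iff₀ hHpos] at h3
  have := h3
  nlinarith [hδ, hHpos]
end

section
/- For any t ≥ 1, the point (R₁, ..., R_t) with R_i = ((t+2−i)/(t+1))·H(1/(t+2−i)) for 1 ≤ i ≤ t−1 and R_t = 2/(t+1) lies in the capacity region C_t with corresponding weight vector (p₁, ..., p_{t−1}) = (1/(t+1), 1/t, ..., 1/3), and R₁ + ... + R_t = log₂(t+1). -/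
open Finset

/-- The binary entropy function (base 2). -/
noncomputable def binH (p : ℝ) : ℝ := -(p * Real.logb 2 p) - (1 - p) * Real.logb 2 (1 - p)

lemma binH_one_div (n : ℝ) (hn : 2 ≤ n) :
    binH (1/n) = Real.logb 2 n - ((n-1)/n) * Real.logb 2 (n-1) := by
  have hn0 : n ≠ 0 := by linarith
  have hn1 : n - 1 ≠ 0 := by linarith
  unfold binH
  rw [show (1:ℝ) - 1/n = (n-1)/n by field_simp]
  rw [Real.logb_div one_ne_zero hn0, Real.logb_div hn1 hn0, Real.logb_one]
  field_simp
  ring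

/-- The point `R_i = ((t+2-i)/(t+1))·H(1/(t+2-i))` for `i ≤ t-1`, `R_t = 2/(t+1)` lies
in the capacity region `C_t` with weight vector `p_j = 1/(t+2-j)`, and its total rate is
`log₂(t+1)`. -/
theorem stmt_9 (t : ℕ) (ht : 1 ≤ t) (R p : ℕ → ℝ)
    (hR : ∀ i, 1 ≤ i → i ≤ t - 1 →
      R i = (((t : ℝ) + 2 - i) / ((t : ℝ) + 1)) * binH (1 / ((t : ℝ) + 2 - i)))
    (hRt : R t = 2 / ((t : ℝ) + 1))
    (hp : ∀ j, 1 ≤ j → j ≤ t - 1 → p j = 1 / ((t : ℝ) + 2 - j)) :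
    (∀ j, 1 ≤ j → j ≤ t - 1 → 0 ≤ p j ∧ p j ≤ 1 / 2) ∧
    (∀ i, 1 ≤ i → i ≤ t - 1 →
      R i ≤ (∏ j ∈ Finset.Icc 1 (i - 1), (1 - p j)) * binH (p i)) ∧
    R t ≤ (∏ j ∈ Finset.Icc 1 (t - 1), (1 - p j)) ∧
    (∑ i ∈ Finset.Icc 1 t, R i) = Real.logb 2 ((t : ℝ) + 1) := by
  have ht1 : (1:ℝ) ≤ (t:ℝ) := by exact_mod_cast ht
  have hcast : ((t - 1 : ℕ) : ℝ) = (t:ℝ) - 1 := by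
    rw [Nat.cast_sub ht]; norm_num
  have hjle : ∀ j : ℕ, j ≤ t - 1 → (j:ℝ) ≤ (t:ℝ) - 1 := by
    intro j hj
    calc (j:ℝ) ≤ ((t-1:ℕ):ℝ) := by exact_mod_cast hj
    _ = (t:ℝ) - 1 := hcast
  have hp2 : ∀ j : ℕ, j ≤ t - 1 → (3:ℝ) ≤ (t:ℝ) + 2 - j := by
    intro j h2; have := hjle j h2; linarith
  have hprod : ∀ m, m ≤ t - 1 →
      (∏ j ∈ Finset.Icc 1 m, (1 - p j)) = ((t:ℝ) + 1 - m) / ((t:ℝ) + 1) := by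
    intro m
    induction m with
    | zero =>
      intro _
      simp
      exact (div_self (by linarith)).symm
    | succ k ih =>
      intro hk
      have hk' : k ≤ t - 1 := Nat.le_of_succ_le hk
      rw [Finset.prod_Icc_succ_top (Nat.succ_le_succ (Nat.zero_le k)), ih hk',
        hp (k+1) (Nat.succ_le_succ (Nat.zero_le k)) hk]
      have h3 : (3:ℝ) ≤ (t:ℝ) + 2 - ((k:ℕ)+1 : ℕ) := hp2 (k+1) hk
      push_cast at h3 ⊢
      have h0 : (t:ℝ) + 2 - ((k:ℝ)+1) ≠ 0 := by linarith
      have h1 : (t:ℝ) + 1 ≠ 0 := by linarith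
      field_simp
      ring
  refine ⟨?_, ?_, ?_, ?_⟩
  · intro j h1 h2
    rw [hp j h1 h2]
    have h3 := hp2 j h2
    constructor
    · positivity
    · rw [div_le_div_iff₀ (by linarith) (by norm_num)]
      linarith
  · intro i h1 h2
    have hi3 := hp2 i h2
    have hprodi : (∏ j ∈ Finset.Icc 1 (i-1), (1 - p j)) = ((t:ℝ)+2-i)/((t:ℝ)+1) := by
      rw [hprod (i-1) (by omega)]
      have : ((i-1:ℕ):ℝ) = (i:ℝ) - 1 := by rw [Nat.cast_sub h1]; norm_num
      rw [this]; ring_nf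
    rw [hR i h1 h2, hprodi, hp i h1 h2]
  · rw [hRt, hprod (t-1) le_rfl, hcast]
    apply le_of_eq
    ring_nf
  · set g : ℕ → ℝ := fun k => (((t:ℝ)+2-k) * Real.logb 2 ((t:ℝ)+2-k)) / ((t:ℝ)+1) with hg
    have hRg : ∀ i, 1 ≤ i → i ≤ t - 1 → R i = g i - g (i+1) := by
      intro i h1 h2
      have hi3 := hp2 i h2
      rw [hR i h1 h2, binH_one_div _ (by linarith)]
      simp only [hg]
      push_cast
      have h0 : (t:ℝ) + 2 - i ≠ 0 := by linarith
      have h1' : (t:ℝ) + 1 ≠ 0 := by linarith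
      field_simp
      ring
    have htt : t = (t - 1) + 1 := (Nat.succ_pred_eq_of_pos ht).symm
    have hsplit : (∑ i ∈ Finset.Icc 1 t, R i) = (∑ i ∈ Finset.Icc 1 (t-1), R i) + R t := by
      conv_lhs => rw [htt]
      rw [Finset.sum_Icc_succ_top (by omega), ← htt]
    have htel : ∀ m : ℕ, ∑ i ∈ Finset.Icc 1 m, (g i - g (i+1)) = g 1 - g (m+1) := by
      intro m
      induction m with
      | zero => simp
      | succ k ih =>
        rw [Finset.sum_Icc_succ_top (Nat.succ_le_succ (Nat.zero_le k)), ih]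
        ring
    have hmid : (∑ i ∈ Finset.Icc 1 (t-1), R i) = g 1 - g t := by
      have hstep : (∑ i ∈ Finset.Icc 1 (t-1), R i)
          = ∑ i ∈ Finset.Icc 1 (t-1), (g i - g (i+1)) :=
        Finset.sum_congr rfl (fun i hi => by
          rw [Finset.mem_Icc] at hi
          exact hRg i hi.1 hi.2)
      rw [hstep, htel, show t - 1 + 1 = t from by omega]
    have hg1 : g 1 = Real.logb 2 ((t:ℝ) + 1) := by
      simp only [hg]
      push_cast
      rw [show (t:ℝ) + 2 - 1 = (t:ℝ) + 1 by ring]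
      field_simp
    have hgt : g t = 2 / ((t:ℝ) + 1) := by
      simp only [hg]
      rw [show (t:ℝ) + 2 - (t:ℝ) = 2 by ring, Real.logb_self_eq_one (by norm_num : (1:ℝ) < 2)]
      ring
    rw [hsplit, hmid, hg1, hgt, hRt]
    ring
end

section
/- For any 0 ≤ p₁, ..., p_{t−1} ≤ 1/2, the sum H(p₁) + ∑_{i=2}^{t−1} ∏_{j=1}^{i−1}(1−p_j)·H(p_i) + ∏_{j=1}^{t−1}(1−p_j) is at most log₂(t+1). -/
open Finset

lemma gibbs_aux (p a : ℝ) (hp : 0 ≤ p) (ha : 0 < a) :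
    p * (Real.log a - Real.log p) ≤ a - p := by
  rcases eq_or_lt_of_le hp with h | h
  · simp [← h]; linarith
  · have h1 := Real.log_le_sub_one_of_pos (show 0 < a / p by positivity)
    rw [Real.log_div ha.ne' h.ne'] at h1
    have h2 : p * (Real.log a - Real.log p) ≤ p * (a / p - 1) :=
      mul_le_mul_of_nonneg_left h1 hp
    have h3 : p * (a / p - 1) = a - p := by field_simp
    linarith

lemma key_ineq (p m : ℝ) (hp0 : 0 ≤ p) (hp1 : p ≤ 1) (hm : 1 ≤ m) :
    binH p + (1 - p) * Real.logb 2 m ≤ Real.logb 2 (m + 1) := by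
  have hm0 : (0:ℝ) < m := lt_of_lt_of_le one_pos hm
  have hm1 : (0:ℝ) < m + 1 := by linarith
  have h2 : (0:ℝ) < Real.log 2 := Real.log_pos one_lt_two
  have key_log : -(p * Real.log p) - (1 - p) * Real.log (1 - p) + (1 - p) * Real.log m
      ≤ Real.log (m + 1) := by
    have g1 := gibbs_aux p (1 / (m + 1)) hp0 (by positivity)
    have g2 := gibbs_aux (1 - p) (m / (m + 1)) (by linarith) (by positivity)
    rw [Real.log_div one_ne_zero hm1.ne', Real.log_one] at g1
    rw [Real.log_div hm0.ne' hm1.ne'] at g2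
    have hsum : 1 / (m + 1) + m / (m + 1) = 1 := by
      field_simp; ring
    nlinarith [g1, g2, hsum]
  have heq : binH p + (1 - p) * Real.logb 2 m
      = (-(p * Real.log p) - (1 - p) * Real.log (1 - p) + (1 - p) * Real.log m) / Real.log 2 := by
    unfold binH Real.logb; ring
  rw [heq, Real.logb]
  exact div_le_div_of_nonneg_right key_log h2.le

lemma icc_one_eq (i : ℕ) (hi : 1 ≤ i) : Icc 1 i = insert 1 (Icc 2 i) := by
  ext x; simp; omega

lemma prod_shift (p : ℕ → ℝ) (i : ℕ) (hi : 1 ≤ i) :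
    ∏ j ∈ Icc 1 i, (1 - p j) = (1 - p 1) * ∏ j ∈ Icc 1 (i - 1), (1 - p (j + 1)) := by
  rw [icc_one_eq i hi, Finset.prod_insert (by simp)]
  congr 1
  rw [show Icc 2 i = Finset.map (addRightEmbedding 1) (Icc 1 (i - 1)) by
      rw [Finset.map_add_right_Icc]; congr 1; omega,
    Finset.prod_map]
  simp [addRightEmbedding]

lemma main_aux : ∀ n : ℕ, 1 ≤ n → ∀ p : ℕ → ℝ,
    (∀ j, 1 ≤ j → j ≤ n → 0 ≤ p j ∧ p j ≤ 1 / 2) →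
    binH (p 1) + (∑ i ∈ Icc 2 n, (∏ j ∈ Icc 1 (i - 1), (1 - p j)) * binH (p i)) +
      (∏ j ∈ Icc 1 n, (1 - p j)) ≤ Real.logb 2 ((n : ℝ) + 2) := by
  intro n hn
  induction n, hn using Nat.le_induction with
  | base =>
    intro p hp
    have h2 : Real.logb 2 2 = 1 := by simp
    have := key_ineq (p 1) 2 (hp 1 le_rfl le_rfl).1
      (by linarith [(hp 1 le_rfl le_rfl).2]) (by norm_num)
    rw [h2] at this
    simp only [show Icc 2 1 = (∅ : Finset ℕ) by decide, Finset.sum_empty, Icc_self,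
      Finset.prod_singleton]
    norm_num at this ⊢
    linarith
  | succ n hn ih =>
    intro p hp
    set q : ℕ → ℝ := fun j => p (j + 1) with hq
    have hq1 : ∀ j, 1 ≤ j → j ≤ n → 0 ≤ q j ∧ q j ≤ 1 / 2 := by
      intro j h1 h2; exact hp (j + 1) (by omega) (by omega)
    have hp1 := hp 1 (by omega) (by omega)
    have ihq := ih q hq1
    -- rewrite the sum
    have hsum : (∑ i ∈ Icc 2 (n + 1), (∏ j ∈ Icc 1 (i - 1), (1 - p j)) * binH (p i))
        = (1 - p 1) * (binH (q 1) +
            ∑ i ∈ Icc 2 n, (∏ j ∈ Icc 1 (i - 1), (1 - q j)) * binH (q i)) := by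
      rw [show Icc 2 (n + 1) = Finset.map (addRightEmbedding 1) (Icc 1 n) by
          rw [Finset.map_add_right_Icc], Finset.sum_map]
      have : ∀ i ∈ Icc 1 n,
          (∏ j ∈ Icc 1 (addRightEmbedding 1 i - 1), (1 - p j)) * binH (p (addRightEmbedding 1 i))
          = (1 - p 1) * ((∏ j ∈ Icc 1 (i - 1), (1 - q j)) * binH (q i)) := by
        intro i hi
        simp only [addRightEmbedding, Function.Embedding.coeFn_mk, Nat.add_sub_cancel]
        rw [prod_shift p i (Finset.mem_Icc.mp hi).1]
        ring
      rw [Finset.sum_congr rfl this, ← Finset.mul_sum]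
      congr 1
      rw [icc_one_eq n hn, Finset.sum_insert (by simp)]
      simp
    have hprod : (∏ j ∈ Icc 1 (n + 1), (1 - p j)) = (1 - p 1) * ∏ j ∈ Icc 1 n, (1 - q j) := by
      rw [prod_shift p (n + 1) (by omega)]
      simp [hq]
    rw [hsum, hprod]
    have hnn : (0:ℝ) ≤ 1 - p 1 := by linarith [hp1.2]
    have step1 : binH (p 1) + ((1 - p 1) * (binH (q 1) +
          ∑ i ∈ Icc 2 n, (∏ j ∈ Icc 1 (i - 1), (1 - q j)) * binH (q i)))
        + (1 - p 1) * ∏ j ∈ Icc 1 n, (1 - q j)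
        ≤ binH (p 1) + (1 - p 1) * Real.logb 2 ((n : ℝ) + 2) := by
      have := mul_le_mul_of_nonneg_left ihq hnn
      nlinarith [this]
    have step2 := key_ineq (p 1) ((n : ℝ) + 2) hp1.1 (by linarith [hp1.2]) (by have := Nat.cast_nonneg (α := ℝ) n; linarith)
    have : ((n:ℝ) + 2) + 1 = ((n + 1 : ℕ) : ℝ) + 2 := by push_cast; ring
    rw [this] at step2
    linarith

/-- The maximal total rate over the capacity region of `t`-write binary WOM codes is
`log₂(t+1)`: for any `0 ≤ p₁,…,p_{t-1} ≤ 1/2`,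
`H(p₁) + ∑_{i=2}^{t-1} ∏_{j<i}(1-p_j)·H(p_i) + ∏_{j=1}^{t-1}(1-p_j) ≤ log₂(t+1)`. -/
theorem stmt_10 (t : ℕ) (ht : 2 ≤ t) (p : ℕ → ℝ)
    (hp : ∀ j, 1 ≤ j → j ≤ t - 1 → 0 ≤ p j ∧ p j ≤ 1 / 2) :
    binH (p 1) +
      (∑ i ∈ Finset.Icc 2 (t - 1), (∏ j ∈ Finset.Icc 1 (i - 1), (1 - p j)) * binH (p i)) +
      (∏ j ∈ Finset.Icc 1 (t - 1), (1 - p j)) ≤ Real.logb 2 ((t : ℝ) + 1) := by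
  have h := main_aux (t - 1) (by omega) p hp
  have : ((t - 1 : ℕ) : ℝ) + 2 = (t : ℝ) + 1 := by
    have : (1:ℕ) ≤ t := by omega
    push_cast [Nat.cast_sub this]
    ring
  rwa [this] at h
end
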